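/- For a differential valuation U = (u_0, u_1) of order 1 in ℝ^n and a function f : [0,1]^n → [0,1] that is continuous and piecewise linear, f belongs to p_U (i.e., f vanishes on conv(u_0, u_0 + u_1/m) for some positive integer m) if and only if f(u_0) = 0 and the one-sided directional derivative ∂f(u_0)/∂u_1 equals 0. -/

import Mathlib

open Filter Topology Set

noncomputable section

/-- The unit cube `[0,1]^n`. -/
def cube (n : ℕ) : Set (Fin n → ℝ) := {x | ∀ i, x i ∈ Set.Icc (0:ℝ) 1}

/-- Euclidean dot product on `ℝ^n`. -/
def dot {n : ℕ} (u v : Fin n → ℝ) : ℝ := ∑ k, u k * v k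

/-- `f` is piecewise linear on the cube: finitely many affine pieces. -/
def PL {n : ℕ} (f : (Fin n → ℝ) → ℝ) : Prop :=
  ∃ (k : ℕ) (c : Fin k → ℝ) (a : Fin k → Fin n → ℝ),
    ∀ x ∈ cube n, ∃ i : Fin k, f x = c i + ∑ j, a i j * x j

set_option maxHeartbeats 1600000 in
/-- for a differential valuation `(u₀, u₁)` of order 1,
a continuous piecewise linear `f : [0,1]^n → [0,1]` vanishes on a segment
`conv(u₀, u₀ + u₁/m)` iff `f u₀ = 0` and `∂f(u₀)/∂u₁ = 0`. -/
theorem order_one_pU_characterization {n : ℕ}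
    (u0 u1 : Fin n → ℝ) (hu1 : dot u1 u1 = 1)
    (hseg : ∃ M : ℕ, 1 ≤ M ∧ ∀ m : ℕ, M ≤ m →
      segment ℝ u0 (u0 + ((m:ℝ))⁻¹ • u1) ⊆ cube n)
    (f : (Fin n → ℝ) → ℝ) (hfc : ContinuousOn f (cube n)) (hfPL : PL f)
    (hrange : ∀ x ∈ cube n, f x ∈ Set.Icc (0:ℝ) 1) :
    (∃ m : ℕ, 1 ≤ m ∧ ∀ x ∈ segment ℝ u0 (u0 + ((m:ℝ))⁻¹ • u1), f x = 0) ↔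
    (f u0 = 0 ∧ Filter.Tendsto (fun ε : ℝ => (f (u0 + ε • u1) - f u0) / ε)
      (nhdsWithin 0 (Set.Ioi 0)) (nhds 0)) := by
  obtain ⟨M, hM1, hMseg⟩ := hseg
  constructor
  · rintro ⟨m, hm1, hz⟩
    have hmpos : (0:ℝ) < m := by exact_mod_cast hm1
    have hmem : ∀ ε : ℝ, 0 ≤ ε → ε ≤ (m:ℝ)⁻¹ →
        u0 + ε • u1 ∈ segment ℝ u0 (u0 + ((m:ℝ))⁻¹ • u1) := by
      intro ε hε0 hε1
      refine ⟨1 - ε * m, ε * m, ?_, by positivity, by ring, ?_⟩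
      · have : ε * m ≤ 1 := by
          rw [← le_div_iff₀ hmpos] at *
          simpa [one_div] using hε1
        linarith
      · funext j
        simp only [Pi.add_apply, Pi.smul_apply, smul_eq_mul]
        field_simp
        ring
    have hf0 : f u0 = 0 := hz u0 (left_mem_segment ℝ _ _)
    refine ⟨hf0, ?_⟩
    have hIoo : Set.Ioo (0:ℝ) ((m:ℝ)⁻¹) ∈ nhdsWithin (0:ℝ) (Set.Ioi 0) :=
      Ioo_mem_nhdsGT_of_mem ⟨le_refl 0, by positivity⟩
    have hev : (fun ε : ℝ => (f (u0 + ε • u1) - f u0) / ε) =ᶠ[nhdsWithin (0:ℝ) (Set.Ioi 0)]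
        (fun _ => (0:ℝ)) := by
      filter_upwards [hIoo] with ε hε
      have := hz _ (hmem ε hε.1.le hε.2.le)
      simp [this, hf0]
    exact Tendsto.congr' hev.symm tendsto_const_nhds
  · rintro ⟨hf0, hT⟩
    obtain ⟨k, cc, a, hPL⟩ := hfPL
    have hu0cube : u0 ∈ cube n := hMseg M le_rfl (left_mem_segment ℝ _ _)
    obtain ⟨i0, _⟩ := hPL u0 hu0cube
    have hne : (Finset.univ : Finset (Fin k)).Nonempty := ⟨i0, Finset.mem_univ _⟩
    set B : Fin k → ℝ := fun i => cc i + ∑ j, a i j * u0 j with hB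
    set S : Fin k → ℝ := fun i => ∑ j, a i j * u1 j with hS
    set D : Fin k → ℝ := fun i => if B i = 0 then 1 else |B i| / (2 * (|S i| + 1)) with hDdef
    set C : Fin k → ℝ := fun i => if B i = 0 then (if S i = 0 then 1 else |S i|) else 1
      with hCdef
    have hDpos : ∀ i, 0 < D i := by
      intro i
      simp only [hDdef]
      split_ifs with h
      · norm_num
      · have : |B i| > 0 := abs_pos.mpr h
        positivity
    have hCpos : ∀ i, 0 < C i := by
      intro i
      simp only [hCdef]
      split_ifs with h h2
      · norm_num
      · exact abs_pos.mpr h2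
      · norm_num
    set c : ℝ := Finset.univ.inf' hne C with hc
    set δ : ℝ := Finset.univ.inf' hne D with hδ
    have hcpos : 0 < c := by
      rw [hc, Finset.lt_inf'_iff]
      intro i _
      exact hCpos i
    have hδpos : 0 < δ := by
      rw [hδ, Finset.lt_inf'_iff]
      intro i _
      exact hDpos i
    clear_value B S D C c δ
    obtain ⟨δ', hδ'pos, hδ'⟩ := Metric.tendsto_nhdsWithin_nhds.mp hT c hcpos
    obtain ⟨N, hN⟩ := exists_nat_gt (max (1/δ') (1/δ))
    set m : ℕ := max M (N + 1) with hm
    have hm1 : 1 ≤ m := le_trans hM1 (le_max_left _ _)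
    have hmpos : (0:ℝ) < m := by exact_mod_cast hm1
    have hmN : (N:ℝ) < m := by
      have : N + 1 ≤ m := le_max_right _ _
      exact_mod_cast Nat.lt_of_lt_of_le (Nat.lt_succ_self N) this
    have hminv1 : (m:ℝ)⁻¹ < δ' := by
      have h1 : 1/δ' < (m:ℝ) := lt_trans (lt_of_le_of_lt (le_max_left _ _) hN) hmN
      rw [inv_lt_comm₀ hmpos hδ'pos] at *
      simpa [one_div] using h1
    have hminv2 : (m:ℝ)⁻¹ < δ := by
      have h1 : 1/δ < (m:ℝ) := lt_trans (lt_of_le_of_lt (le_max_right _ _) hN) hmN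
      rw [inv_lt_comm₀ hmpos hδpos] at *
      simpa [one_div] using h1
    refine ⟨m, hm1, ?_⟩
    rintro x hx
    obtain ⟨α, β, hα, hβ, hαβ, hxe⟩ := hx
    have hxeq : x = u0 + (β * (m:ℝ)⁻¹) • u1 := by
      rw [← hxe]
      funext j
      simp only [Pi.add_apply, Pi.smul_apply, smul_eq_mul]
      have : α = 1 - β := by linarith
      rw [this]; ring
    rcases eq_or_lt_of_le hβ with hβ0 | hβpos
    · rw [hxeq, ← hβ0]
      simpa using hf0
    · set ε : ℝ := β * (m:ℝ)⁻¹ with hεdef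
      have hεpos : 0 < ε := by positivity
      rw [hεdef] at hxeq
      rw [← hεdef] at hxeq
      clear_value ε
      have hβ1 : β ≤ 1 := by linarith
      have hεle : ε ≤ (m:ℝ)⁻¹ := by
        rw [hεdef]
        nlinarith [inv_pos.mpr hmpos]
      have hxcube : x ∈ cube n := hMseg m (le_max_left _ _) ⟨α, β, hα, hβ, hαβ, hxe⟩
      obtain ⟨i, hi⟩ := hPL x hxcube
      have hfx : f x = B i + S i * ε := by
        rw [hi, hxeq]
        have hterm : ∀ j, a i j * (u0 j + ε * u1 j)
            = a i j * u0 j + ε * (a i j * u1 j) := fun j => by ring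
        simp only [Pi.add_apply, Pi.smul_apply, smul_eq_mul, hterm,
          Finset.sum_add_distrib, ← Finset.mul_sum]
        rw [hB, hS]
        ring
      have hfxlt : |f x| < c * ε := by
        have h := hδ' (show ε ∈ Set.Ioi (0:ℝ) from hεpos)
          (by simpa [abs_of_pos hεpos] using lt_of_le_of_lt hεle hminv1)
        rw [Real.dist_eq, hf0, sub_zero, sub_zero, ← hxeq,
          abs_div, abs_of_pos hεpos] at h
        exact (div_lt_iff₀ hεpos).mp h
      have hcC : c ≤ C i := hc ▸ Finset.inf'_le _ (Finset.mem_univ i)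
      have hεD : ε ≤ D i := le_trans (le_trans hεle hminv2.le)
        (hδ ▸ Finset.inf'_le _ (Finset.mem_univ i))
      have hBi : B i = 0 := by
        by_contra hBne
        have hDi : D i = |B i| / (2 * (|S i| + 1)) := by simp [hDdef, hBne]
        have hCi : C i = 1 := by simp [hCdef, hBne]
        have hεD' : ε * (2 * (|S i| + 1)) ≤ |B i| := by
          rw [hDi] at hεD
          have h2 : (0:ℝ) < 2 * (|S i| + 1) := by positivity
          exact (le_div_iff₀ h2).mp hεD
        have htri : |B i| - |S i * ε| ≤ |B i + S i * ε| := by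
          have := abs_sub_abs_le_abs_sub (B i) (-(S i * ε))
          simpa [sub_neg_eq_add] using this
        rw [abs_mul, abs_of_pos hεpos] at htri
        have hBpos : 0 < |B i| := abs_pos.mpr hBne
        have hc1 : c ≤ 1 := hCi ▸ hcC
        rw [hfx] at hfxlt
        have habs : |B i + S i * ε| ≤ c * ε := hfxlt.le
        have h3 : |B i| ≤ c * ε + |S i| * ε := by nlinarith [abs_nonneg (S i)]
        nlinarith [abs_nonneg (S i)]
      have hSi : S i = 0 := by
        by_contra hSne
        have hCi : C i = |S i| := by simp [hCdef, hBi, hSne]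
        rw [hfx, hBi, zero_add, abs_mul, abs_of_pos hεpos] at hfxlt
        have hle : c ≤ |S i| := hCi ▸ hcC
        nlinarith
      rw [hfx, hBi, hSi]
      ring
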